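/- Let Q be a compact convex set in ℝ² with (cos α)·D_O ⊆ Q ⊆ D_O, where D_O is the unit disk centered at the origin and α ∈ (0, π/4). Let x, y be two distinct points of ∂Q, and let ℓ_x and ℓ_y be supporting lines of Q at x and y respectively. Then the difference between the acute angle that ℓ_x makes with the line through x and y, and the acute angle that ℓ_y makes with that line, is at most 2α. -/

import Mathlib

open scoped RealInnerProductSpace
open scoped Pointwise
open Real

abbrev E2 : Type := EuclideanSpace ℝ (Fin 2)

/-- Key estimate: if `m` is a unit normal with `cos α ≤ ⟪m, w⟫`, `‖w‖ ≤ 1`, and `d` is a unit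
vector, then `arcsin |⟪m,d⟫| + arcsin ‖w - ⟪w,d⟫•d‖` is within `α` of `π/2`. -/
lemma key_est (α : ℝ) (hα0 : 0 < α) (hα1 : α < π / 2)
    (m w d : E2) (hm : ‖m‖ = 1) (hd : ‖d‖ = 1) (hw : ‖w‖ ≤ 1)
    (hcw : Real.cos α ≤ ⟪m, w⟫) :
    |Real.arcsin |⟪m, d⟫| + Real.arcsin ‖w - ⟪w, d⟫ • d‖ - π / 2| ≤ α := by
  have hdd : ⟪d, d⟫ = (1 : ℝ) := by
    rw [real_inner_self_eq_norm_sq, hd]; norm_num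
  set s : ℝ := ⟪m, d⟫ with hs
  set t : ℝ := ⟪w, d⟫ with ht
  set u : E2 := w - t • d with hu
  set p : ℝ := ‖u‖ with hp
  have hdu : ⟪d, u⟫ = 0 := by
    simp only [hu, inner_sub_right, real_inner_smul_right, hdd, mul_one]
    rw [real_inner_comm]; ring
  have hud : ⟪u, d⟫ = 0 := by rw [real_inner_comm]; exact hdu
  -- Pythagoras: t^2 + p^2 = ‖w‖^2
  have hwdec : w = t • d + u := by simp [hu]
  have hpyth : t ^ 2 + p ^ 2 = ‖w‖ ^ 2 := by
    have := norm_add_sq_real (t • d) u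
    rw [← hwdec] at this
    rw [this, norm_smul, real_inner_smul_left, hdu, hd]
    simp [abs_mul_abs_self, hp]
  have hp0 : 0 ≤ p := norm_nonneg _
  have hp1 : p ≤ 1 := by nlinarith [norm_nonneg w, sq_nonneg t]
  have hs1 : |s| ≤ 1 := by
    have := abs_real_inner_le_norm m d
    rwa [hm, hd, mul_one] at this
  -- norm of m - s • d
  have hmperp : ‖m - s • d‖ ^ 2 = 1 - s ^ 2 := by
    have := norm_sub_sq_real m (s • d)
    rw [this, real_inner_smul_right, norm_smul, hd, hm]
    simp [abs_mul_abs_self, ← hs]; ring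
  have hmperp' : ‖m - s • d‖ = Real.sqrt (1 - s ^ 2) := by
    rw [← hmperp]; exact (Real.sqrt_sq (norm_nonneg _)).symm
  -- ⟪m, w⟫ = s * t + ⟪m - s•d, u⟫
  have hmw : ⟪m, w⟫ = s * t + ⟪m - s • d, u⟫ := by
    rw [hwdec]
    simp only [inner_add_right, inner_sub_left, real_inner_smul_right,
      real_inner_smul_left, hdu, hud]
    simp only [← hs, mul_zero, sub_zero]
    ring
  have hCS : ⟪m - s • d, u⟫ ≤ Real.sqrt (1 - s ^ 2) * p := by
    calc ⟪m - s • d, u⟫ ≤ ‖m - s • d‖ * ‖u‖ := real_inner_le_norm _ _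
      _ = Real.sqrt (1 - s ^ 2) * p := by rw [hmperp']
  have htle : |t| ≤ Real.sqrt (1 - p ^ 2) := by
    have h1 : t ^ 2 ≤ 1 - p ^ 2 := by nlinarith [norm_nonneg w]
    calc |t| = Real.sqrt (t ^ 2) := (Real.sqrt_sq_eq_abs t).symm
      _ ≤ Real.sqrt (1 - p ^ 2) := Real.sqrt_le_sqrt h1
  have hst : s * t ≤ |s| * Real.sqrt (1 - p ^ 2) := by
    calc s * t ≤ |s * t| := le_abs_self _
      _ = |s| * |t| := abs_mul s t
      _ ≤ |s| * Real.sqrt (1 - p ^ 2) :=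
        mul_le_mul_of_nonneg_left htle (abs_nonneg s)
  have hmain : Real.cos α ≤ |s| * Real.sqrt (1 - p ^ 2) + Real.sqrt (1 - s ^ 2) * p := by
    rw [hmw] at hcw; linarith
  -- trigonometric form
  set θ : ℝ := Real.arcsin |s| with hθ
  set φ : ℝ := Real.arcsin p with hφ
  have hθ0 : 0 ≤ θ := Real.arcsin_nonneg.2 (abs_nonneg s)
  have hθpi : θ ≤ π / 2 := Real.arcsin_le_pi_div_two _
  have hφ0 : 0 ≤ φ := Real.arcsin_nonneg.2 hp0
  have hφpi : φ ≤ π / 2 := Real.arcsin_le_pi_div_two _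
  have hsinθ : Real.sin θ = |s| := Real.sin_arcsin (by linarith [abs_nonneg s]) hs1
  have hcosθ : Real.cos θ = Real.sqrt (1 - s ^ 2) := by
    rw [hθ, Real.cos_arcsin, sq_abs]
  have hsinφ : Real.sin φ = p := Real.sin_arcsin (by linarith) hp1
  have hcosφ : Real.cos φ = Real.sqrt (1 - p ^ 2) := by
    rw [hφ, Real.cos_arcsin]
  have hsum : Real.cos α ≤ Real.sin (θ + φ) := by
    rw [Real.sin_add, hsinθ, hcosθ, hsinφ, hcosφ]; linarith
  have hca : Real.cos α = Real.sin (π / 2 - α) := (Real.sin_pi_div_two_sub α).symm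
  have hπ : 0 < π := Real.pi_pos
  -- conclude π/2 - α ≤ θ + φ ≤ π/2 + α
  rw [abs_le]
  constructor
  · -- π/2 - α ≤ θ + φ
    by_contra hcon
    push_neg at hcon
    have h2 : θ + φ < π / 2 - α := by linarith
    have := Real.sin_lt_sin_of_lt_of_le_pi_div_two (x := θ + φ) (y := π / 2 - α)
      (by linarith) (by linarith) h2
    rw [← hca] at this; linarith
  · -- θ + φ ≤ π/2 + α
    by_contra hcon
    push_neg at hcon
    have h2 : θ + φ > π / 2 + α := by linarith
    have hsin_eq : Real.sin (θ + φ) = Real.sin (π - (θ + φ)) := (Real.sin_pi_sub _).symm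
    have := Real.sin_lt_sin_of_lt_of_le_pi_div_two (x := π - (θ + φ)) (y := π / 2 - α)
      (by linarith) (by linarith) (by linarith)
    rw [← hca] at this
    rw [hsin_eq] at hsum
    linarith

theorem stmt_2 (α : ℝ) (hα : α ∈ Set.Ioo 0 (π / 4))
    (Q : Set E2) (hQc : IsCompact Q) (hQconv : Convex ℝ Q)
    (hsub : Real.cos α • Metric.closedBall (0 : E2) 1 ⊆ Q)
    (hsup : Q ⊆ Metric.closedBall (0 : E2) 1)
    (x y : E2) (hx : x ∈ frontier Q) (hy : y ∈ frontier Q) (hxy : x ≠ y)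
    (nx ny : E2) (hnx : ‖nx‖ = 1) (hny : ‖ny‖ = 1)
    (hsuppx : ∀ w ∈ Q, ⟪nx, w - x⟫ ≤ 0)
    (hsuppy : ∀ w ∈ Q, ⟪ny, w - y⟫ ≤ 0) :
    abs (Real.arcsin |⟪nx, ‖y - x‖⁻¹ • (y - x)⟫| -
        Real.arcsin |⟪ny, ‖y - x‖⁻¹ • (y - x)⟫|) ≤ 2 * α := by
  obtain ⟨hα0, hα4⟩ := hα
  have hα1 : α < π / 2 := by linarith [Real.pi_pos]
  have hQclosed : IsClosed Q := hQc.isClosed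
  have hxQ : x ∈ Q := hQclosed.frontier_subset hx
  have hyQ : y ∈ Q := hQclosed.frontier_subset hy
  have hxn : ‖x‖ ≤ 1 := by
    have := hsup hxQ; rwa [Metric.mem_closedBall, dist_zero_right] at this
  have hyn : ‖y‖ ≤ 1 := by
    have := hsup hyQ; rwa [Metric.mem_closedBall, dist_zero_right] at this
  -- cos α ≤ ⟪nx, x⟫ and cos α ≤ ⟪ny, y⟫
  have hcos_pos : 0 < Real.cos α := Real.cos_pos_of_mem_Ioo
    ⟨by linarith [Real.pi_pos], hα1⟩
  have hcx : Real.cos α ≤ ⟪nx, x⟫ := by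
    have hmem : Real.cos α • nx ∈ Real.cos α • Metric.closedBall (0 : E2) 1 :=
      Set.smul_mem_smul_set (by rw [Metric.mem_closedBall, dist_zero_right, hnx])
    have := hsuppx _ (hsub hmem)
    rw [inner_sub_right, real_inner_smul_right, real_inner_self_eq_norm_sq, hnx] at this
    simpa using this
  have hcy : Real.cos α ≤ ⟪ny, y⟫ := by
    have hmem : Real.cos α • ny ∈ Real.cos α • Metric.closedBall (0 : E2) 1 :=
      Set.smul_mem_smul_set (by rw [Metric.mem_closedBall, dist_zero_right, hny])
    have := hsuppy _ (hsub hmem)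
    rw [inner_sub_right, real_inner_smul_right, real_inner_self_eq_norm_sq, hny] at this
    simpa using this
  set z : E2 := y - x with hz
  have hz0 : z ≠ 0 := sub_ne_zero.2 hxy.symm
  have hL : 0 < ‖z‖ := norm_pos_iff.2 hz0
  set d : E2 := ‖z‖⁻¹ • z with hdd
  have hd : ‖d‖ = 1 := by
    rw [hdd, norm_smul, norm_inv, norm_norm, inv_mul_cancel₀ hL.ne']
  -- the perpendicular components of x and y agree
  have hLd : ‖z‖ • d = z := by
    rw [hdd, smul_smul, mul_inv_cancel₀ hL.ne', one_smul]
  have hzd : ⟪z, d⟫ = ‖z‖ := by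
    rw [hdd, real_inner_smul_right, real_inner_self_eq_norm_sq, sq]
    field_simp
  have hyd : ⟪y, d⟫ = ⟪x, d⟫ + ‖z‖ := by
    have : y = x + z := by rw [hz]; abel
    rw [this, inner_add_left, hzd]
  have hperp : x - ⟪x, d⟫ • d = y - ⟪y, d⟫ • d := by
    rw [hyd, add_smul, hLd]
    have : y = x + z := by rw [hz]; abel
    rw [this]; abel
  have h1 := key_est α hα0 hα1 nx x d hnx hd hxn hcx
  have h2 := key_est α hα0 hα1 ny y d hny hd hyn hcy
  rw [hperp] at h1
  rw [abs_le] at h1 h2 ⊢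
  constructor <;> [linarith [h1.1, h1.2, h2.1, h2.2]; linarith [h1.1, h1.2, h2.1, h2.2]]
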